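/- Let X ∈ ℝ^{m×n}, b ∈ ℝ^m, λ > 0, let p₁ be a norm on ℝⁿ, and let p₂ : ℝⁿ → ℝ be a convex differentiable function. Define g(β) = ‖Xβ − b‖ + λ p₁(β) − p₂(β), and for σ ≥ 0, τ ≥ 0 and β̄ ∈ ℝⁿ define h(β; σ, τ, β̄) = ‖Xβ − b‖ + λ p₁(β) − p₂(β̄) − ⟨∇p₂(β̄), β − β̄⟩ + (σ/2)‖β − β̄‖² + (τ/2)‖Xβ − Xβ̄‖². Then β̄ is a d-stationary point of g (i.e., the one-sided directional derivative g'(β̄; d) = lim_{t↓0} (g(β̄ + t d) − g(β̄))/t is nonnegative for every d ∈ ℝⁿ) if and only if there exist σ ≥ 0 and τ ≥ 0 such that β̄ is a global minimizer of h(·; σ, τ, β̄) over ℝⁿ. -/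

import Mathlib

open scoped RealInnerProductSpace

noncomputable section

/-- A function `p` is a norm on a real vector space. -/
def IsNorm {E : Type*} [AddCommGroup E] [Module ℝ E] (p : E → ℝ) : Prop :=
  (∀ x y, p (x + y) ≤ p x + p y) ∧ (∀ (c : ℝ) (x : E), p (c • x) = |c| * p x) ∧
    (∀ x, p x = 0 ↔ x = 0)

/-- The dual norm `q_*(z) = sup {⟨z, β⟩ : q β ≤ 1}`. -/
def dualNorm {ι : Type*} [Fintype ι] (q : EuclideanSpace ℝ ι → ℝ)
    (z : EuclideanSpace ℝ ι) : ℝ :=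
  sSup {r : ℝ | ∃ β : EuclideanSpace ℝ ι, q β ≤ 1 ∧ r = ⟪z, β⟫}

/-- `β_S`: the vector agreeing with `β` on `S` and zero on the complement. -/
def projS {n : ℕ} (S : Finset (Fin n)) (β : EuclideanSpace ℝ (Fin n)) :
    EuclideanSpace ℝ (Fin n) :=
  WithLp.toLp 2 (fun i => if i ∈ S then β i else 0)

/-- `β_{S̄}`: the vector agreeing with `β` on the complement of `S` and zero on `S`. -/
def projSc {n : ℕ} (S : Finset (Fin n)) (β : EuclideanSpace ℝ (Fin n)) :
    EuclideanSpace ℝ (Fin n) :=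
  WithLp.toLp 2 (fun i => if i ∈ S then 0 else β i)

/-- `β^{S̄}`: the restriction of `β` to the complement of `S`. -/
def restrC {n : ℕ} (S : Finset (Fin n)) (β : EuclideanSpace ℝ (Fin n)) :
    EuclideanSpace ℝ {i : Fin n // i ∉ S} :=
  WithLp.toLp 2 (fun j : {i : Fin n // i ∉ S} => β j.1)

/-- Matrix-vector multiplication as a map between Euclidean spaces. -/
def mulVecE {m n : ℕ} (X : Matrix (Fin m) (Fin n) ℝ) (β : EuclideanSpace ℝ (Fin n)) :
    EuclideanSpace ℝ (Fin m) :=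
  WithLp.toLp 2 (X.mulVec β)

lemma mulVecE_add {m n : ℕ} (X : Matrix (Fin m) (Fin n) ℝ) (u v : EuclideanSpace ℝ (Fin n)) :
    mulVecE X (u + v) = mulVecE X u + mulVecE X v := by
  simp [mulVecE, Matrix.mulVec_add]

lemma mulVecE_smul {m n : ℕ} (X : Matrix (Fin m) (Fin n) ℝ) (t : ℝ)
    (u : EuclideanSpace ℝ (Fin n)) : mulVecE X (t • u) = t • mulVecE X u := by
  simp [mulVecE, Matrix.mulVec_smul]

lemma conv_line' {E : Type*} [AddCommGroup E] [Module ℝ E] {c : E → ℝ}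
    (hc : ConvexOn ℝ Set.univ c) (x d : E) :
    ConvexOn ℝ Set.univ (fun t : ℝ => c (x + t • d)) := by
  refine ⟨convex_univ, fun s _ t _ a a' ha ha' hab => ?_⟩
  have e : x + (a • s + a' • t) • d = a • (x + s • d) + a' • (x + t • d) := by
    have e2 : a • (x + s • d) + a' • (x + t • d)
        = (a + a') • x + (a * s + a' * t) • d := by module
    rw [e2, hab, one_smul, smul_eq_mul, smul_eq_mul]
  show c (x + (a • s + a' • t) • d) ≤ a • c (x + s • d) + a' • c (x + t • d)
  rw [e]
  exact hc.2 (Set.mem_univ _) (Set.mem_univ _) ha ha' hab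

/-- `β̄` is a d-stationary point of `g` iff it is a global minimizer of
the proximal majorization `h(·; σ, τ, β̄)` for some `σ, τ ≥ 0`. -/
theorem dStationary_iff_pmm_minimizer {m n : ℕ} (X : Matrix (Fin m) (Fin n) ℝ)
    (b : EuclideanSpace ℝ (Fin m)) (lam : ℝ) (hlam : 0 < lam)
    (p1 : EuclideanSpace ℝ (Fin n) → ℝ) (hp1 : IsNorm p1)
    (p2 : EuclideanSpace ℝ (Fin n) → ℝ) (hp2conv : ConvexOn ℝ Set.univ p2)
    (hp2diff : ∀ x, DifferentiableAt ℝ p2 x)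
    (g : EuclideanSpace ℝ (Fin n) → ℝ)
    (hg : ∀ β, g β = ‖mulVecE X β - b‖ + lam * p1 β - p2 β)
    (βbar : EuclideanSpace ℝ (Fin n))
    (h : ℝ → ℝ → EuclideanSpace ℝ (Fin n) → ℝ)
    (hh : ∀ (σ τ : ℝ) (β : EuclideanSpace ℝ (Fin n)),
      h σ τ β = ‖mulVecE X β - b‖ + lam * p1 β - p2 βbar -
        ⟪gradient p2 βbar, β - βbar⟫ + σ / 2 * ‖β - βbar‖ ^ 2 +
        τ / 2 * ‖mulVecE X β - mulVecE X βbar‖ ^ 2) :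
    (∀ d : EuclideanSpace ℝ (Fin n), ∃ L : ℝ, 0 ≤ L ∧
        Filter.Tendsto (fun t : ℝ => (g (βbar + t • d) - g βbar) / t)
          (nhdsWithin 0 (Set.Ioi 0)) (nhds L)) ↔
      ∃ σ τ : ℝ, 0 ≤ σ ∧ 0 ≤ τ ∧
        ∀ β : EuclideanSpace ℝ (Fin n), h σ τ βbar ≤ h σ τ β := by
  classical
  set c : EuclideanSpace ℝ (Fin n) → ℝ := fun β => ‖mulVecE X β - b‖ + lam * p1 β with hc_def
  have hce : ∀ γ, c γ = ‖mulVecE X γ - b‖ + lam * p1 γ := fun _ => rfl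
  have hgc : ∀ β, g β = c β - p2 β := fun β => by rw [hg, hce]
  -- convexity of c
  have hcconv : ConvexOn ℝ Set.univ c := by
    refine ⟨convex_univ, fun x _ y _ a a' ha ha' hab => ?_⟩
    have hX : mulVecE X (a • x + a' • y) - b
        = a • (mulVecE X x - b) + a' • (mulVecE X y - b) := by
      have e1 : a • (mulVecE X x - b) + a' • (mulVecE X y - b)
          = a • mulVecE X x + a' • mulVecE X y - (a + a') • b := by module
      rw [mulVecE_add, mulVecE_smul, mulVecE_smul, e1, hab, one_smul]
    have hn : ‖mulVecE X (a • x + a' • y) - b‖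
        ≤ a * ‖mulVecE X x - b‖ + a' * ‖mulVecE X y - b‖ := by
      rw [hX]
      calc ‖a • (mulVecE X x - b) + a' • (mulVecE X y - b)‖
          ≤ ‖a • (mulVecE X x - b)‖ + ‖a' • (mulVecE X y - b)‖ := norm_add_le _ _
        _ = a * ‖mulVecE X x - b‖ + a' * ‖mulVecE X y - b‖ := by
            rw [norm_smul, norm_smul, Real.norm_eq_abs, Real.norm_eq_abs,
              abs_of_nonneg ha, abs_of_nonneg ha']
    have hp : p1 (a • x + a' • y) ≤ a * p1 x + a' * p1 y := by
      calc p1 (a • x + a' • y) ≤ p1 (a • x) + p1 (a' • y) := hp1.1 _ _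
        _ = a * p1 x + a' * p1 y := by
            rw [hp1.2.1, hp1.2.1, abs_of_nonneg ha, abs_of_nonneg ha']
    have hp' : lam * p1 (a • x + a' • y) ≤ lam * (a * p1 x + a' * p1 y) :=
      mul_le_mul_of_nonneg_left hp hlam.le
    show ‖mulVecE X (a • x + a' • y) - b‖ + lam * p1 (a • x + a' • y)
        ≤ a • (‖mulVecE X x - b‖ + lam * p1 x) + a' • (‖mulVecE X y - b‖ + lam * p1 y)
    simp only [smul_eq_mul]
    nlinarith [hn, hp']
  -- gradient/inner
  have grad_inner : ∀ v : EuclideanSpace ℝ (Fin n),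
      ⟪gradient p2 βbar, v⟫ = fderiv ℝ p2 βbar v := fun v => by
    rw [gradient]; exact InnerProductSpace.toDual_symm_apply
  -- key per-direction analysis
  have key : ∀ d : EuclideanSpace ℝ (Fin n), ∃ Lc : ℝ,
      (∀ t : ℝ, 0 < t → Lc ≤ (c (βbar + t • d) - c βbar) / t) ∧
      Filter.Tendsto (fun t : ℝ => (g (βbar + t • d) - g βbar) / t)
        (nhdsWithin 0 (Set.Ioi 0)) (nhds (Lc - ⟪gradient p2 βbar, d⟫)) ∧
      Filter.Tendsto (fun t : ℝ => (c (βbar + t • d) - c βbar) / t)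
        (nhdsWithin 0 (Set.Ioi 0)) (nhds Lc) := by
    intro d
    set F : ℝ → ℝ := fun t => c (βbar + t • d) with hF_def
    have hF : ConvexOn ℝ Set.univ F := conv_line' hcconv βbar d
    have hF0 : F 0 = c βbar := by simp [hF_def]
    have hmono : MonotoneOn (slope F 0) (Set.univ \ {0}) := hF.slope_mono (Set.mem_univ 0)
    have hmono' : MonotoneOn (slope F 0) (Set.Ioi 0) :=
      hmono.mono (fun t ht => ⟨Set.mem_univ _, ne_of_gt ht⟩)
    have hbdd : BddBelow (slope F 0 '' Set.Ioi 0) := by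
      refine ⟨slope F 0 (-1), ?_⟩
      rintro _ ⟨t, ht, rfl⟩
      exact hmono ⟨Set.mem_univ _, by norm_num⟩ ⟨Set.mem_univ _, ne_of_gt ht⟩
        (by simp at ht ⊢; linarith)
    have hslope : ∀ t : ℝ, slope F 0 t = (c (βbar + t • d) - c βbar) / t := fun t => by
      rw [slope_def_field, hF0, sub_zero]
    refine ⟨sInf (slope F 0 '' Set.Ioi 0), ?_, ?_, ?_⟩
    · intro t ht
      rw [← hslope]
      exact csInf_le hbdd (Set.mem_image_of_mem _ ht)
    · -- g quotient
      have htend : Filter.Tendsto (slope F 0) (nhdsWithin 0 (Set.Ioi 0))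
          (nhds (sInf (slope F 0 '' Set.Ioi 0))) :=
        hmono'.tendsto_nhdsGT hbdd
      -- p2 part
      have hline : HasDerivAt (fun t : ℝ => βbar + t • d) d 0 := by
        simpa using ((hasDerivAt_id (0 : ℝ)).smul_const d).const_add βbar
      have hfd : HasFDerivAt p2 (fderiv ℝ p2 βbar) ((fun t : ℝ => βbar + t • d) 0) := by
        simpa using (hp2diff βbar).hasFDerivAt
      have hp2' : HasDerivAt (p2 ∘ fun t : ℝ => βbar + t • d) (fderiv ℝ p2 βbar d) 0 :=
        hfd.comp_hasDerivAt 0 hline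
      have hr : Filter.Tendsto (slope (p2 ∘ fun t : ℝ => βbar + t • d) 0)
          (nhdsWithin 0 (Set.Ioi 0)) (nhds (fderiv ℝ p2 βbar d)) :=
        (hasDerivAt_iff_tendsto_slope.mp hp2').mono_left
          (nhdsWithin_mono 0 (fun t ht => ne_of_gt ht))
      have := htend.sub hr
      rw [← grad_inner] at this
      refine this.congr' ?_
      refine Filter.eventuallyEq_of_mem self_mem_nhdsWithin (fun t ht => ?_)
      have ht' : (t : ℝ) ≠ 0 := ne_of_gt ht
      rw [hslope, slope_def_field, sub_zero]
      simp only [Function.comp]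
      rw [hgc, hgc]
      have h0 : βbar + (0:ℝ) • d = βbar := by simp
      rw [h0]
      ring
    · exact (hmono'.tendsto_nhdsGT hbdd).congr (fun t => hslope t)
  constructor
  · rintro hstat
    refine ⟨0, 0, le_refl 0, le_refl 0, fun β => ?_⟩
    obtain ⟨Lc, hle, htg, _⟩ := key (β - βbar)
    obtain ⟨L, hL0, hLt⟩ := hstat (β - βbar)
    have hLeq : L = Lc - ⟪gradient p2 βbar, β - βbar⟫ := tendsto_nhds_unique hLt htg
    have h1 : Lc ≤ (c (βbar + (1:ℝ) • (β - βbar)) - c βbar) / 1 := hle 1 one_pos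
    rw [one_smul, div_one, show βbar + (β - βbar) = β from by abel] at h1
    have hmain : ⟪gradient p2 βbar, β - βbar⟫ ≤ c β - c βbar := by linarith
    rw [hh, hh]
    rw [← hce, ← hce]
    simp only [sub_self, inner_zero_right, norm_zero, zero_div, zero_mul, add_zero]
    linarith [hmain]
  · rintro ⟨σ, τ, hσ, hτ, hmin⟩ d
    obtain ⟨Lc, hle, htg, htc⟩ := key d
    refine ⟨Lc - ⟪gradient p2 βbar, d⟫, ?_, htg⟩
    set K : ℝ := σ / 2 * ‖d‖ ^ 2 + τ / 2 * ‖mulVecE X d‖ ^ 2 with hK_def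
    have hineq : ∀ t : ℝ, 0 < t →
        ⟪gradient p2 βbar, d⟫ - t * K ≤ (c (βbar + t • d) - c βbar) / t := by
      intro t ht
      have hm := hmin (βbar + t • d)
      rw [hh, hh] at hm
      rw [← hce, ← hce] at hm
      have e1 : βbar + t • d - βbar = t • d := by abel
      have e2 : mulVecE X (βbar + t • d) - mulVecE X βbar = t • mulVecE X d := by
        rw [mulVecE_add, mulVecE_smul]; abel
      rw [e1, e2] at hm
      rw [real_inner_smul_right] at hm
      rw [norm_smul, norm_smul, Real.norm_eq_abs, mul_pow, mul_pow, sq_abs] at hm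
      simp only [sub_self, inner_zero_right, norm_zero] at hm
      simp only [sub_self, inner_zero_right, norm_zero, zero_pow, mul_zero, add_zero,
        sub_zero, ne_eq, OfNat.ofNat_ne_zero, not_false_eq_true] at hm
      rw [le_div_iff₀ ht, hK_def]
      nlinarith [hm]
    have h2 : Filter.Tendsto (fun t : ℝ => ⟪gradient p2 βbar, d⟫ - t * K)
        (nhdsWithin 0 (Set.Ioi 0)) (nhds ⟪gradient p2 βbar, d⟫) := by
      have : Filter.Tendsto (fun t : ℝ => ⟪gradient p2 βbar, d⟫ - t * K)
          (nhds 0) (nhds (⟪gradient p2 βbar, d⟫ - 0 * K)) :=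
        (tendsto_const_nhds.sub ((continuous_id.mul continuous_const).tendsto 0))
      rw [zero_mul, sub_zero] at this
      exact this.mono_left nhdsWithin_le_nhds
    have hfin : ⟪gradient p2 βbar, d⟫ ≤ Lc :=
      le_of_tendsto_of_tendsto h2 htc
        (Filter.eventually_of_mem self_mem_nhdsWithin (fun t ht => hineq t ht))
    linarith
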